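/- Define D(x) = (1/π) ∫₀^∞ cos(tx) · t² · log t · exp(−t²) dt, the derivative at θ = 0 of the symmetric stable density f(x;θ) = (1/π) ∫₀^∞ cos(tx) exp(−t^{2−θ}) dt, whose value at θ = 0 is the N(0,2) density f(x;0) = (1/(2√π)) exp(−x²/4). Then: (i) ∫_{-∞}^∞ |D(x)| dx < ∞ and ∫_{-∞}^∞ D(x) dx = 0, so that the score ℓ(x) = D(x)/f(x;0) has expectation 0 under N(0,2); but (ii) ∫_{-∞}^∞ D(x)² / f(x;0) dx = ∞, i.e. the score has infinite second moment under N(0,2) (the Fisher information for α diverges as α ↑ 2). -/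

import Mathlib

open MeasureTheory Real Set Filter
open scoped ENNReal Topology FourierTransform

/-- `D(x) = (1/π) ∫₀^∞ cos(tx) t² log t exp(-t²) dt`, the θ-derivative at `θ = 0` of the
symmetric stable density `f(x;θ) = (1/π) ∫₀^∞ cos(tx) exp(-t^{2-θ}) dt`. -/
noncomputable def symStableDeriv (x : ℝ) : ℝ :=
  (1 / Real.pi) * ∫ t in Set.Ioi (0 : ℝ), Real.cos (t * x) * t ^ 2 * Real.log t *
    Real.exp (-(t ^ 2))

/-- The `N(0,2)` density, the value of the symmetric stable density at `θ = 0`. -/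
noncomputable def normal02Pdf (x : ℝ) : ℝ :=
  (1 / (2 * Real.sqrt Real.pi)) * Real.exp (-x ^ 2 / 4)

namespace StableAux

noncomputable def gfun (t : ℝ) : ℝ := t ^ 2 * Real.log t * Real.exp (-(t ^ 2))
noncomputable def g1 (t : ℝ) : ℝ :=
  (2*t*Real.log t + t - 2*t^3*Real.log t) * Real.exp (-(t^2))
noncomputable def g2 (t : ℝ) : ℝ :=
  (2*Real.log t + 3 - 10*t^2*Real.log t - 4*t^2 + 4*t^4*Real.log t) * Real.exp (-(t^2))
noncomputable def gabs (t : ℝ) : ℝ := t ^ 2 * Real.log |t| * Real.exp (-(t ^ 2))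
noncomputable def Ig (x : ℝ) : ℝ := ∫ t in Set.Ioi (0:ℝ), Real.cos (t*x) * gfun t
noncomputable def B2 (t : ℝ) : ℝ :=
  (2*|Real.log t| + 3 + 10*t^2*|Real.log t| + 4*t^2 + 4*t^4*|Real.log t|) * Real.exp (-(t^2))
noncomputable def B0 (t : ℝ) : ℝ := t^2*|Real.log t| * Real.exp (-(t^2))

lemma log_abs_le {t : ℝ} (ht : 0 < t) : |Real.log t| ≤ 2 / Real.sqrt t + t := by
  rcases le_or_gt 1 t with h | h
  · rw [abs_of_nonneg (Real.log_nonneg h)]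
    have h1 : Real.log t ≤ t - 1 := Real.log_le_sub_one_of_pos ht
    have h2 : (0:ℝ) ≤ 2 / Real.sqrt t := by positivity
    linarith
  · rw [abs_of_neg (Real.log_neg ht h)]
    have hs : 0 < Real.sqrt t := Real.sqrt_pos.2 ht
    have h1 : Real.log (Real.sqrt t) = Real.log t / 2 := Real.log_sqrt ht.le
    have h2 : Real.log (Real.sqrt t)⁻¹ ≤ (Real.sqrt t)⁻¹ - 1 :=
      Real.log_le_sub_one_of_pos (by positivity)
    rw [Real.log_inv, h1] at h2
    have h3 : 2 / Real.sqrt t = 2 * (Real.sqrt t)⁻¹ := by rw [div_eq_mul_inv]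
    linarith [ht.le]

lemma maj_int {s : ℝ} (hs : -1 < s) :
    IntegrableOn (fun t : ℝ => t ^ s * Real.exp (-(t^2))) (Set.Ioi 0) := by
  simpa using integrableOn_rpow_mul_exp_neg_mul_sq one_pos hs

lemma pow_log_le {t : ℝ} (ht : 0 < t) (n : ℕ) :
    t ^ n * |Real.log t| ≤ 2 * t ^ ((n : ℝ) - 1/2) + t ^ (n + 1) := by
  have h1 : t ^ n * |Real.log t| ≤ t ^ n * (2 / Real.sqrt t + t) :=
    mul_le_mul_of_nonneg_left (log_abs_le ht) (pow_nonneg ht.le n)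
  have h3 : t ^ n / Real.sqrt t = t ^ ((n : ℝ) - 1/2) := by
    rw [Real.rpow_sub ht, Real.rpow_natCast, ← Real.sqrt_eq_rpow]
  have h2 : t ^ n * (2 / Real.sqrt t + t) = 2 * (t ^ n / Real.sqrt t) + t ^ (n+1) := by ring
  rw [h2, h3] at h1
  exact h1

lemma meas_exp : Measurable (fun t : ℝ => Real.exp (-(t^2))) :=
  ((measurable_id.pow_const 2).neg).exp

lemma int_pow_log (n : ℕ) :
    IntegrableOn (fun t : ℝ => t ^ n * |Real.log t| * Real.exp (-(t ^ 2))) (Set.Ioi 0) := by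
  have hs1 : (-1:ℝ) < (n : ℝ) - 1/2 := by
    have : (0:ℝ) ≤ n := Nat.cast_nonneg n
    linarith
  have hs2 : (-1:ℝ) < ((n:ℝ) + 1) := by
    have : (0:ℝ) ≤ n := Nat.cast_nonneg n
    linarith
  have hmaj : IntegrableOn
      (fun t : ℝ => 2 * (t ^ ((n:ℝ) - 1/2) * Real.exp (-(t^2)))
        + t ^ ((n:ℝ)+1) * Real.exp (-(t^2))) (Set.Ioi 0) :=
    ((maj_int hs1).const_mul 2).add (maj_int hs2)
  refine Integrable.mono' hmaj ?_ ?_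
  · exact (((measurable_id.pow_const n).mul Real.measurable_log.abs).mul
      meas_exp).aestronglyMeasurable.restrict
  · filter_upwards [ae_restrict_mem measurableSet_Ioi] with t ht
    have ht' : (0:ℝ) < t := ht
    have h4 : t ^ ((n:ℝ)+1) = t ^ (n+1) := by
      rw [show ((n:ℝ)+1) = ((n+1 : ℕ):ℝ) by push_cast; ring, Real.rpow_natCast]
    rw [Real.norm_eq_abs, abs_of_nonneg (by positivity)]
    have h5 := mul_le_mul_of_nonneg_right (pow_log_le ht' n) (Real.exp_nonneg (-(t^2)))
    calc t ^ n * |Real.log t| * Real.exp (-(t^2))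
        ≤ (2 * t ^ ((n:ℝ) - 1/2) + t ^ (n+1)) * Real.exp (-(t^2)) := h5
      _ = 2 * (t ^ ((n:ℝ) - 1/2) * Real.exp (-(t^2)))
            + t ^ ((n:ℝ)+1) * Real.exp (-(t^2)) := by rw [h4]; ring

lemma int_pow (n : ℕ) :
    IntegrableOn (fun t : ℝ => t ^ n * Real.exp (-(t ^ 2))) (Set.Ioi 0) := by
  have hs : (-1:ℝ) < (n:ℝ) := by
    have : (0:ℝ) ≤ n := Nat.cast_nonneg n
    linarith
  simpa [Real.rpow_natCast] using maj_int hs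


lemma hasDerivAt_exp_neg_sq (t : ℝ) :
    HasDerivAt (fun t : ℝ => Real.exp (-(t^2))) (Real.exp (-(t^2)) * (-(2*t))) t := by
  have := ((hasDerivAt_pow 2 t).neg).exp
  refine this.congr_deriv ?_
  simp

lemma hd_gfun {t : ℝ} (ht : 0 < t) : HasDerivAt gfun (g1 t) t := by
  have hL : HasDerivAt Real.log t⁻¹ t := Real.hasDerivAt_log (ne_of_gt ht)
  have h1 : HasDerivAt (fun t : ℝ => t^2 * Real.log t)
      (2*t*Real.log t + t) t := by
    have := (hasDerivAt_pow 2 t).mul hL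
    refine this.congr_deriv ?_
    field_simp
    ring
  have := h1.mul (hasDerivAt_exp_neg_sq t)
  refine this.congr_deriv ?_
  unfold g1
  ring

lemma hd_g1 {t : ℝ} (ht : 0 < t) : HasDerivAt g1 (g2 t) t := by
  have hL : HasDerivAt Real.log t⁻¹ t := Real.hasDerivAt_log (ne_of_gt ht)
  have ha : HasDerivAt (fun t : ℝ => 2*t*Real.log t)
      (2*Real.log t + 2) t := by
    have h0 : HasDerivAt (fun t : ℝ => 2*t) 2 t := by
      simpa using (hasDerivAt_id t).const_mul (2:ℝ)
    have := h0.mul hL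
    refine this.congr_deriv ?_
    field_simp
  have hb : HasDerivAt (fun t : ℝ => 2*t^3*Real.log t)
      (6*t^2*Real.log t + 2*t^2) t := by
    have h0 : HasDerivAt (fun t : ℝ => 2*t^3) (6*t^2) t := by
      have := (hasDerivAt_pow 3 t).const_mul (2:ℝ)
      refine this.congr_deriv ?_
      push_cast
      ring
    have := h0.mul hL
    refine this.congr_deriv ?_
    field_simp
  have hp : HasDerivAt (fun t : ℝ => 2*t*Real.log t + t - 2*t^3*Real.log t)
      (2*Real.log t + 3 - 6*t^2*Real.log t - 2*t^2) t := by
    have := (ha.add (hasDerivAt_id t)).sub hb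
    refine this.congr_deriv ?_
    ring
  have := hp.mul (hasDerivAt_exp_neg_sq t)
  refine this.congr_deriv ?_
  unfold g2
  ring

lemma hd_F (x : ℝ) {t : ℝ} (ht : 0 < t) :
    HasDerivAt (fun t : ℝ => Real.cos (t*x) * g1 t + x * Real.sin (t*x) * gfun t)
      (Real.cos (t*x) * g2 t + x^2 * (Real.cos (t*x) * gfun t)) t := by
  have hmul : HasDerivAt (fun t : ℝ => t * x) x t := hasDerivAt_mul_const x
  have hcos : HasDerivAt (fun t : ℝ => Real.cos (t*x)) (-Real.sin (t*x) * x) t := hmul.cos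
  have hsin : HasDerivAt (fun t : ℝ => Real.sin (t*x)) (Real.cos (t*x) * x) t := hmul.sin
  have h1 := hcos.mul (hd_g1 ht)
  have h2 := (hsin.const_mul x).mul (hd_gfun ht)
  have := h1.add h2
  refine this.congr_deriv ?_
  ring


-- limits at 0+
lemma tendsto_exp_nsq : Tendsto (fun t : ℝ => Real.exp (-(t^2))) (𝓝[>] (0:ℝ)) (𝓝 1) := by
  have h : Continuous (fun t : ℝ => Real.exp (-(t^2))) := ((continuous_pow 2).neg).rexp
  have h2 : Tendsto (fun t : ℝ => Real.exp (-(t^2))) (𝓝 (0:ℝ)) (𝓝 (Real.exp (-(0:ℝ)^2))) :=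
    h.tendsto 0
  have h3 := h2.mono_left (nhdsWithin_le_nhds (s := Set.Ioi (0:ℝ)))
  simpa using h3

lemma tendsto_log_pow (n : ℕ) (hn : 0 < n) :
    Tendsto (fun t : ℝ => Real.log t * t ^ n) (𝓝[>] (0:ℝ)) (𝓝 0) := by
  have h := tendsto_log_mul_rpow_nhdsGT_zero (r := (n:ℝ)) (by exact_mod_cast hn)
  refine h.congr' ?_
  filter_upwards [self_mem_nhdsWithin] with t (ht : (0:ℝ) < t)
  rw [Real.rpow_natCast]

lemma tendsto_g1_zero : Tendsto g1 (𝓝[>] (0:ℝ)) (𝓝 0) := by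
  have l1 := tendsto_log_pow 1 one_pos
  have l3 := tendsto_log_pow 3 (by norm_num)
  have hid : Tendsto (fun t : ℝ => t) (𝓝[>] (0:ℝ)) (𝓝 0) := by
    have h2 : Tendsto (fun t : ℝ => t) (𝓝 (0:ℝ)) (𝓝 (0:ℝ)) := continuous_id.tendsto 0
    exact h2.mono_left (nhdsWithin_le_nhds (s := Set.Ioi (0:ℝ)))
  have hpoly : Tendsto (fun t : ℝ => 2*t*Real.log t + t - 2*t^3*Real.log t)
      (𝓝[>] (0:ℝ)) (𝓝 0) := by
    have h := ((l1.const_mul 2).add hid).sub (l3.const_mul 2)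
    have h0 : (2*(0:ℝ) + 0 - 2*0) = 0 := by norm_num
    rw [h0] at h
    exact h.congr fun t => by ring
  have := hpoly.mul tendsto_exp_nsq
  rw [zero_mul] at this
  exact this

lemma tendsto_gfun_zero : Tendsto gfun (𝓝[>] (0:ℝ)) (𝓝 0) := by
  have l2 := tendsto_log_pow 2 (by norm_num)
  have h := l2.mul tendsto_exp_nsq
  have h0 : ((0:ℝ) * 1) = 0 := by norm_num
  rw [h0] at h
  exact h.congr fun t => by simp only [gfun]; ring

-- limits at ∞
lemma tend_pow_exp (n : ℕ) :
    Tendsto (fun t : ℝ => t ^ n * Real.exp (-(t^2))) atTop (𝓝 0) := by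
  apply squeeze_zero_norm' (a := fun t : ℝ => t ^ n * Real.exp (-t))
  · filter_upwards [eventually_ge_atTop (1:ℝ)] with t ht
    have ht0 : (0:ℝ) < t := lt_of_lt_of_le one_pos ht
    rw [Real.norm_eq_abs, abs_of_nonneg (by positivity)]
    have : t ≤ t^2 := by nlinarith
    have hE : Real.exp (-(t^2)) ≤ Real.exp (-t) := Real.exp_le_exp.2 (by linarith)
    exact mul_le_mul_of_nonneg_left hE (by positivity)
  · exact tendsto_pow_mul_exp_neg_atTop_nhds_zero n

lemma tendsto_g1_top : Tendsto g1 atTop (𝓝 0) := by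
  apply squeeze_zero_norm' (a := fun t : ℝ => 5 * (t ^ 4 * Real.exp (-(t^2))))
  · filter_upwards [eventually_ge_atTop (1:ℝ)] with t ht
    have ht0 : (0:ℝ) < t := lt_of_lt_of_le one_pos ht
    have hL0 : 0 ≤ Real.log t := Real.log_nonneg ht
    have hLt : Real.log t ≤ t := by
      have := Real.log_le_sub_one_of_pos ht0
      linarith
    rw [Real.norm_eq_abs, g1, abs_mul, abs_of_pos (Real.exp_pos _)]
    have hp24 : t^2 ≤ t^4 := pow_le_pow_right₀ ht (by norm_num)
    have hp14 : t ≤ t^4 := by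
      calc t = t^1 := (pow_one t).symm
        _ ≤ t^4 := pow_le_pow_right₀ ht (by norm_num)
    have habs : |2*t*Real.log t + t - 2*t^3*Real.log t| ≤ 5 * t^4 := by
      rw [abs_le]
      constructor <;> nlinarith [mul_le_mul_of_nonneg_left hLt (by positivity : (0:ℝ) ≤ 2*t),
        mul_le_mul_of_nonneg_left hLt (by positivity : (0:ℝ) ≤ 2*t^3),
        mul_nonneg (by positivity : (0:ℝ) ≤ 2*t) hL0,
        mul_nonneg (by positivity : (0:ℝ) ≤ 2*t^3) hL0]
    calc |2*t*Real.log t + t - 2*t^3*Real.log t| * Real.exp (-(t^2))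
        ≤ 5 * t^4 * Real.exp (-(t^2)) :=
          mul_le_mul_of_nonneg_right habs (Real.exp_nonneg _)
      _ = 5 * (t^4 * Real.exp (-(t^2))) := by ring
  · simpa using (tend_pow_exp 4).const_mul 5

lemma tendsto_gfun_top : Tendsto gfun atTop (𝓝 0) := by
  apply squeeze_zero_norm' (a := fun t : ℝ => t ^ 3 * Real.exp (-(t^2)))
  · filter_upwards [eventually_ge_atTop (1:ℝ)] with t ht
    have ht0 : (0:ℝ) < t := lt_of_lt_of_le one_pos ht
    have hL0 : 0 ≤ Real.log t := Real.log_nonneg ht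
    have hLt : Real.log t ≤ t := by
      have := Real.log_le_sub_one_of_pos ht0
      linarith
    rw [Real.norm_eq_abs, gfun, abs_mul, abs_of_pos (Real.exp_pos _)]
    have habs : |t^2 * Real.log t| ≤ t^3 := by
      rw [abs_of_nonneg (by positivity)]
      nlinarith
    exact mul_le_mul_of_nonneg_right habs (Real.exp_nonneg _)
  · exact tend_pow_exp 3


lemma meas_gfun : Measurable gfun :=
  ((measurable_id.pow_const 2).mul Real.measurable_log).mul meas_exp

lemma meas_g2 : Measurable g2 := by
  unfold g2
  apply Measurable.mul _ meas_exp
  apply Measurable.add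
  apply Measurable.sub
  apply Measurable.sub
  apply Measurable.add
  · exact Real.measurable_log.const_mul 2
  · exact measurable_const
  · exact ((measurable_id.pow_const 2).const_mul 10).mul Real.measurable_log
  · exact (measurable_id.pow_const 2).const_mul 4
  · exact ((measurable_id.pow_const 4).const_mul 4).mul Real.measurable_log

lemma abs_g2_le {t : ℝ} (ht : 0 < t) : |g2 t| ≤ B2 t := by
  unfold g2 B2
  rw [abs_mul, abs_of_pos (Real.exp_pos _)]
  apply mul_le_mul_of_nonneg_right _ (Real.exp_nonneg _)
  set L := Real.log t with hL
  have h1 : -|L| ≤ L := neg_abs_le L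
  have h2 : L ≤ |L| := le_abs_self L
  have ht2 : (0:ℝ) ≤ t^2 := sq_nonneg t
  have ht4 : (0:ℝ) ≤ t^4 := by positivity
  rw [abs_le]
  constructor <;>
    nlinarith [mul_le_mul_of_nonneg_left h2 ht2, mul_le_mul_of_nonneg_left h1 ht2,
      mul_le_mul_of_nonneg_left h2 ht4, mul_le_mul_of_nonneg_left h1 ht4,
      abs_nonneg L]

lemma intB2 : IntegrableOn B2 (Set.Ioi (0:ℝ)) := by
  have h : B2 = fun t : ℝ => 2*(t^0*|Real.log t| * Real.exp (-(t^2)))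
      + 3*(t^0*Real.exp (-(t^2)))
      + 10*(t^2*|Real.log t| * Real.exp (-(t^2)))
      + 4*(t^2*Real.exp (-(t^2)))
      + 4*(t^4*|Real.log t| * Real.exp (-(t^2))) := by
    funext t; unfold B2; ring
  rw [h]
  exact (((((int_pow_log 0).const_mul 2).add ((int_pow 0).const_mul 3)).add
    ((int_pow_log 2).const_mul 10)).add ((int_pow 2).const_mul 4)).add
    ((int_pow_log 4).const_mul 4)

lemma intB0 : IntegrableOn B0 (Set.Ioi (0:ℝ)) := int_pow_log 2

lemma abs_gfun_le {t : ℝ} (ht : 0 < t) : |gfun t| ≤ B0 t := by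
  unfold gfun B0
  rw [abs_mul, abs_of_pos (Real.exp_pos _), abs_mul, abs_of_nonneg (sq_nonneg t)]

lemma int_cos_gfun (x : ℝ) :
    IntegrableOn (fun t : ℝ => Real.cos (t*x) * gfun t) (Set.Ioi 0) := by
  refine Integrable.mono' intB0 ?_ ?_
  · exact ((Real.continuous_cos.comp (continuous_id.mul
      continuous_const)).measurable.mul meas_gfun).aestronglyMeasurable.restrict
  · filter_upwards [ae_restrict_mem measurableSet_Ioi] with t ht
    rw [Real.norm_eq_abs, abs_mul]
    calc |Real.cos (t*x)| * |gfun t| ≤ 1 * |gfun t| :=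
          mul_le_mul_of_nonneg_right (Real.abs_cos_le_one _) (abs_nonneg _)
      _ = |gfun t| := one_mul _
      _ ≤ B0 t := abs_gfun_le ht

lemma int_cos_g2 (x : ℝ) :
    IntegrableOn (fun t : ℝ => Real.cos (t*x) * g2 t) (Set.Ioi 0) := by
  refine Integrable.mono' intB2 ?_ ?_
  · exact ((Real.continuous_cos.comp (continuous_id.mul
      continuous_const)).measurable.mul meas_g2).aestronglyMeasurable.restrict
  · filter_upwards [ae_restrict_mem measurableSet_Ioi] with t ht
    rw [Real.norm_eq_abs, abs_mul]
    calc |Real.cos (t*x)| * |g2 t| ≤ 1 * |g2 t| :=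
          mul_le_mul_of_nonneg_right (Real.abs_cos_le_one _) (abs_nonneg _)
      _ = |g2 t| := one_mul _
      _ ≤ B2 t := abs_g2_le ht


lemma F_bound (x : ℝ) (t : ℝ) :
    ‖Real.cos (t*x) * g1 t + x * Real.sin (t*x) * gfun t‖ ≤ |g1 t| + |x| * |gfun t| := by
  have h1 := Real.abs_cos_le_one (t*x)
  have h2 := Real.abs_sin_le_one (t*x)
  calc ‖Real.cos (t*x) * g1 t + x * Real.sin (t*x) * gfun t‖
      ≤ |Real.cos (t*x) * g1 t| + |x * Real.sin (t*x) * gfun t| := abs_add_le _ _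
    _ ≤ |g1 t| + |x| * |gfun t| := by
        rw [abs_mul, abs_mul, abs_mul]
        have a1 : |Real.cos (t*x)| * |g1 t| ≤ 1 * |g1 t| :=
          mul_le_mul_of_nonneg_right h1 (abs_nonneg _)
        have a2 : |x| * |Real.sin (t*x)| ≤ |x| * 1 :=
          mul_le_mul_of_nonneg_left h2 (abs_nonneg x)
        have a3 : |x| * |Real.sin (t*x)| * |gfun t| ≤ (|x| * 1) * |gfun t| :=
          mul_le_mul_of_nonneg_right a2 (abs_nonneg _)
        nlinarith

lemma F_zero (x : ℝ) :
    Real.cos ((0:ℝ)*x) * g1 0 + x * Real.sin ((0:ℝ)*x) * gfun 0 = 0 := by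
  simp [g1, gfun]

lemma ftc (x : ℝ) :
    (∫ t in Set.Ioi (0:ℝ),
      (Real.cos (t*x) * g2 t + x^2 * (Real.cos (t*x) * gfun t))) = 0 := by
  have hcont : ContinuousWithinAt
      (fun t : ℝ => Real.cos (t*x) * g1 t + x * Real.sin (t*x) * gfun t)
      (Set.Ici 0) 0 := by
    rw [show Set.Ici (0:ℝ) = insert 0 (Set.Ioi 0) from Set.Ioi_insert.symm,
      continuousWithinAt_insert_self]
    unfold ContinuousWithinAt
    rw [show ((fun t : ℝ => Real.cos (t*x) * g1 t + x * Real.sin (t*x) * gfun t) 0) = 0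
      from F_zero x]
    apply squeeze_zero_norm' (a := fun t : ℝ => |g1 t| + |x| * |gfun t|)
    · filter_upwards with t
      exact F_bound x t
    · have := (tendsto_g1_zero.abs).add ((tendsto_gfun_zero.abs).const_mul |x|)
      simpa using this
  have htop : Tendsto
      (fun t : ℝ => Real.cos (t*x) * g1 t + x * Real.sin (t*x) * gfun t)
      atTop (𝓝 0) := by
    apply squeeze_zero_norm' (a := fun t : ℝ => |g1 t| + |x| * |gfun t|)
    · filter_upwards with t
      exact F_bound x t
    · have := (tendsto_g1_top.abs).add ((tendsto_gfun_top.abs).const_mul |x|)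
      simpa using this
  have hint : IntegrableOn
      (fun t : ℝ => Real.cos (t*x) * g2 t + x^2 * (Real.cos (t*x) * gfun t))
      (Set.Ioi 0) := (int_cos_g2 x).add ((int_cos_gfun x).const_mul (x^2))
  have key := integral_Ioi_of_hasDerivAt_of_tendsto hcont
    (fun t ht => hd_F x (Set.mem_Ioi.1 ht)) hint htop
  rw [key, F_zero x, sub_zero]

lemma x2Ig (x : ℝ) :
    x^2 * Ig x = - ∫ t in Set.Ioi (0:ℝ), Real.cos (t*x) * g2 t := by
  have h := ftc x
  rw [integral_add (int_cos_g2 x) ((int_cos_gfun x).const_mul (x^2)),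
    MeasureTheory.integral_const_mul] at h
  unfold Ig
  linarith

noncomputable def C2 : ℝ := ∫ t in Set.Ioi (0:ℝ), B2 t
noncomputable def C0 : ℝ := ∫ t in Set.Ioi (0:ℝ), B0 t

lemma abs_Ig_le (x : ℝ) : |Ig x| ≤ C0 := by
  rw [show |Ig x| = ‖Ig x‖ from rfl]
  apply norm_integral_le_of_norm_le intB0
  filter_upwards [ae_restrict_mem measurableSet_Ioi] with t ht
  rw [Real.norm_eq_abs, abs_mul]
  calc |Real.cos (t*x)| * |gfun t| ≤ 1 * |gfun t| :=
        mul_le_mul_of_nonneg_right (Real.abs_cos_le_one _) (abs_nonneg _)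
    _ = |gfun t| := one_mul _
    _ ≤ B0 t := abs_gfun_le ht

lemma abs_x2Ig_le (x : ℝ) : |x^2 * Ig x| ≤ C2 := by
  rw [x2Ig, abs_neg, show |∫ t in Set.Ioi (0:ℝ), Real.cos (t*x) * g2 t| =
    ‖∫ t in Set.Ioi (0:ℝ), Real.cos (t*x) * g2 t‖ from rfl]
  apply norm_integral_le_of_norm_le intB2
  filter_upwards [ae_restrict_mem measurableSet_Ioi] with t ht
  rw [Real.norm_eq_abs, abs_mul]
  calc |Real.cos (t*x)| * |g2 t| ≤ 1 * |g2 t| :=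
        mul_le_mul_of_nonneg_right (Real.abs_cos_le_one _) (abs_nonneg _)
    _ = |g2 t| := one_mul _
    _ ≤ B2 t := abs_g2_le ht

lemma Ig_cont : Continuous Ig := by
  apply MeasureTheory.continuous_of_dominated (bound := B0)
  · intro x
    exact ((Real.continuous_cos.comp (continuous_id.mul
      continuous_const)).measurable.mul meas_gfun).aestronglyMeasurable.restrict
  · intro x
    filter_upwards [ae_restrict_mem measurableSet_Ioi] with t ht
    rw [Real.norm_eq_abs, abs_mul]
    calc |Real.cos (t*x)| * |gfun t| ≤ 1 * |gfun t| :=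
          mul_le_mul_of_nonneg_right (Real.abs_cos_le_one _) (abs_nonneg _)
      _ = |gfun t| := one_mul _
      _ ≤ B0 t := abs_gfun_le ht
  · exact intB0
  · filter_upwards with t
    exact (Real.continuous_cos.comp (continuous_const.mul continuous_id)).mul continuous_const

lemma Ig_even (x : ℝ) : Ig (-x) = Ig x := by
  unfold Ig
  congr 1
  funext t
  rw [mul_neg, Real.cos_neg]

lemma Ig_integrable : Integrable Ig := by
  have hI2 : IntegrableOn Ig (Set.Ioi 1) := by
    refine Integrable.mono'
      ((integrableOn_Ioi_rpow_of_lt (by norm_num : (-2:ℝ) < -1) one_pos).const_mul C2) ?_ ?_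
    · exact Ig_cont.aestronglyMeasurable.restrict
    · filter_upwards [ae_restrict_mem measurableSet_Ioi] with x hx
      have hx1 : (1:ℝ) < x := hx
      have hx0 : (0:ℝ) < x := lt_trans one_pos hx1
      have hx2 : (0:ℝ) < x^2 := by positivity
      have h := abs_x2Ig_le x
      rw [abs_mul, abs_of_pos hx2] at h
      have h2 : |Ig x| ≤ C2 / x^2 := by
        rw [le_div_iff₀ hx2, mul_comm]
        exact h
      have hrw : x ^ (-2:ℝ) = (x^2)⁻¹ := by
        rw [show (-2:ℝ) = -((2:ℕ):ℝ) by norm_num, Real.rpow_neg hx0.le, Real.rpow_natCast]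
      have h3 : C2 * x ^ (-2:ℝ) = C2 / x^2 := by rw [hrw, div_eq_mul_inv]
      rw [Real.norm_eq_abs, h3]
      exact h2
  have hI1 : IntegrableOn Ig (Set.Icc (-1) 1) := Ig_cont.integrableOn_Icc
  have hI3 : IntegrableOn Ig (Set.Iio (-1)) := by
    have h0 : IntegrableOn (fun x => Ig (-x)) (Set.Ioi 1) :=
      hI2.congr_fun (fun x _ => (Ig_even x).symm) measurableSet_Ioi
    rw [← (Measure.measurePreserving_neg (volume : Measure ℝ)).integrableOn_comp_preimage
      (Homeomorph.neg ℝ).measurableEmbedding]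
    simpa [Function.comp_def] using h0
  rw [← integrableOn_univ,
    show (Set.univ : Set ℝ) = Set.Iio (-1) ∪ (Set.Icc (-1) 1 ∪ Set.Ioi 1) by
      ext x
      simp only [Set.mem_univ, Set.mem_union, Set.mem_Iio, Set.mem_Icc, Set.mem_Ioi, true_iff]
      rcases lt_or_ge x (-1) with h | h
      · exact Or.inl h
      · rcases le_or_gt x 1 with h2 | h2
        · exact Or.inr (Or.inl ⟨h, h2⟩)
        · exact Or.inr (Or.inr h2),
    integrableOn_union, integrableOn_union]
  exact ⟨hI3, hI1, hI2⟩


lemma gabs_even (t : ℝ) : gabs (-t) = gabs t := by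
  unfold gabs
  rw [abs_neg, neg_pow, neg_pow]
  norm_num

lemma gabs_eq_gfun {t : ℝ} (ht : 0 < t) : gabs t = gfun t := by
  unfold gabs gfun
  rw [abs_of_pos ht]

lemma meas_gabs : Measurable gabs :=
  ((measurable_id.pow_const 2).mul
    (Real.measurable_log.comp continuous_abs.measurable)).mul meas_exp

lemma gabs_integrable : Integrable gabs := by
  have hIoi : IntegrableOn gabs (Set.Ioi 0) := by
    refine Integrable.mono' intB0 meas_gabs.aestronglyMeasurable.restrict ?_
    filter_upwards [ae_restrict_mem measurableSet_Ioi] with t ht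
    rw [Real.norm_eq_abs, gabs_eq_gfun (Set.mem_Ioi.1 ht)]
    exact abs_gfun_le (Set.mem_Ioi.1 ht)
  have hIci : IntegrableOn gabs (Set.Ici 0) := by
    rwa [integrableOn_Ici_iff_integrableOn_Ioi]
  have hIio : IntegrableOn gabs (Set.Iio 0) := by
    have h0 : IntegrableOn (fun x => gabs (-x)) (Set.Ioi 0) :=
      hIoi.congr_fun (fun x _ => (gabs_even x).symm) measurableSet_Ioi
    rw [← (Measure.measurePreserving_neg (volume : Measure ℝ)).integrableOn_comp_preimage
      (Homeomorph.neg ℝ).measurableEmbedding]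
    simpa [Function.comp_def] using h0
  rw [← integrableOn_univ, ← Set.Iio_union_Ici (a := (0:ℝ)), integrableOn_union]
  exact ⟨hIio, hIci⟩

lemma gabs_continuous : Continuous gabs := by
  rw [continuous_iff_continuousAt]
  intro v
  rcases eq_or_ne v 0 with rfl | hv
  · have h0 : gabs 0 = 0 := by simp [gabs]
    unfold ContinuousAt
    rw [h0]
    apply squeeze_zero_norm (a := fun t : ℝ => 2 * (|t| * Real.sqrt |t|) + |t|^3)
    · intro t
      rcases eq_or_ne t 0 with rfl | ht
      · simp [gabs]
      · have hat : (0:ℝ) < |t| := abs_pos.2 ht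
        have hE : Real.exp (-(t^2)) ≤ 1 := by
          rw [Real.exp_le_one_iff]
          nlinarith [sq_nonneg t]
        have h1 : ‖gabs t‖ ≤ t^2 * abs (Real.log |t|) := by
          rw [Real.norm_eq_abs]
          unfold gabs
          rw [abs_mul, abs_mul, abs_of_nonneg (sq_nonneg t), abs_of_pos (Real.exp_pos _)]
          nlinarith [mul_nonneg (sq_nonneg t) (abs_nonneg (Real.log |t|)),
            mul_le_mul_of_nonneg_left hE
              (mul_nonneg (sq_nonneg t) (abs_nonneg (Real.log |t|)))]
        have h2 : t^2 * abs (Real.log |t|) ≤ t^2 * (2 / Real.sqrt |t| + |t|) :=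
          mul_le_mul_of_nonneg_left (log_abs_le hat) (sq_nonneg t)
        have h3 : t^2 * (2 / Real.sqrt |t| + |t|) = 2 * (|t|^2 / Real.sqrt |t|) + |t|^3 := by
          rw [← sq_abs]
          ring
        have h4 : |t|^2 / Real.sqrt |t| = |t| * Real.sqrt |t| := by
          rw [sq, mul_div_assoc, Real.div_sqrt]
        calc ‖gabs t‖ ≤ t^2 * abs (Real.log |t|) := h1
          _ ≤ t^2 * (2 / Real.sqrt |t| + |t|) := h2
          _ = 2 * (|t| * Real.sqrt |t|) + |t|^3 := by rw [h3, h4]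
    · have hc : Continuous (fun t : ℝ => 2 * (|t| * Real.sqrt |t|) + |t|^3) := by
        continuity
      have := hc.tendsto 0
      simpa using this
  · have h1 : ContinuousAt (fun t : ℝ => Real.log |t|) v :=
      (Real.continuousAt_log (abs_ne_zero.2 hv)).comp continuous_abs.continuousAt
    show ContinuousAt (fun t : ℝ => t ^ 2 * Real.log |t| * Real.exp (-(t ^ 2))) v
    exact ((continuous_pow 2).continuousAt.mul h1).mul
      (((continuous_pow 2).neg.rexp).continuousAt)


lemma fourier_even_real (h : ℝ → ℝ) (hint : Integrable h) (hmeas : Measurable h)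
    (hev : ∀ t, h (-t) = h t) (w : ℝ) :
    𝓕 (fun t : ℝ => (h t : ℂ)) w = ((∫ t, Real.cos (2*π*t*w) * h t : ℝ) : ℂ) := by
  rw [Real.fourier_real_eq_integral_exp_smul]
  have hodd : (∫ t, Real.sin (2*π*t*w) * h t) = 0 := by
    have hneg := integral_neg_eq_self (fun t => Real.sin (2*π*t*w) * h t) volume
    have heq : ∀ t : ℝ, Real.sin (2*π*(-t)*w) * h (-t) = -(Real.sin (2*π*t*w) * h t) := by
      intro t
      rw [show 2*π*(-t)*w = -(2*π*t*w) by ring, Real.sin_neg, hev]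
      ring
    simp_rw [heq] at hneg
    rw [integral_neg] at hneg
    linarith
  have hptw : ∀ v : ℝ, Complex.exp (((-2*π*v*w : ℝ) : ℂ) * Complex.I) • ((h v : ℝ) : ℂ)
      = ((Real.cos (2*π*v*w) * h v : ℝ) : ℂ)
        + ((-(Real.sin (2*π*v*w) * h v) : ℝ) : ℂ) * Complex.I := by
    intro v
    rw [smul_eq_mul, Complex.exp_mul_I,
      show ((-2*π*v*w : ℝ) : ℂ) = ((-(2*π*v*w) : ℝ) : ℂ) by norm_num,
      ← Complex.ofReal_cos, ← Complex.ofReal_sin, Real.cos_neg, Real.sin_neg]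
    push_cast
    ring
  simp_rw [hptw]
  have hcosmeas : Measurable (fun v : ℝ => Real.cos (2*π*v*w)) :=
    (Real.continuous_cos.comp (continuous_const.mul continuous_id |>.mul continuous_const)).measurable
  have hsinmeas : Measurable (fun v : ℝ => Real.sin (2*π*v*w)) :=
    (Real.continuous_sin.comp (continuous_const.mul continuous_id |>.mul continuous_const)).measurable
  have hi1r : Integrable (fun v : ℝ => Real.cos (2*π*v*w) * h v) :=
    hint.bdd_mul hcosmeas.aestronglyMeasurable
      (c := 1) (ae_of_all _ fun v => by rw [Real.norm_eq_abs]; exact Real.abs_cos_le_one _)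
  have hi2r : Integrable (fun v : ℝ => Real.sin (2*π*v*w) * h v) :=
    hint.bdd_mul hsinmeas.aestronglyMeasurable
      (c := 1) (ae_of_all _ fun v => by rw [Real.norm_eq_abs]; exact Real.abs_sin_le_one _)
  have hi1 : Integrable (fun v : ℝ => ((Real.cos (2*π*v*w) * h v : ℝ) : ℂ)) := hi1r.ofReal
  have hi2 : Integrable (fun v : ℝ => ((-(Real.sin (2*π*v*w) * h v) : ℝ) : ℂ) * Complex.I) :=
    (hi2r.neg.ofReal).mul_const Complex.I
  rw [integral_add hi1 hi2, integral_mul_const]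
  have e1 : (∫ a : ℝ, ((Real.cos (2*π*a*w) * h a : ℝ) : ℂ))
      = ((∫ a : ℝ, Real.cos (2*π*a*w) * h a : ℝ) : ℂ) := integral_ofReal
  have e2 : (∫ a : ℝ, ((-(Real.sin (2*π*a*w) * h a) : ℝ) : ℂ))
      = ((∫ a : ℝ, -(Real.sin (2*π*a*w) * h a) : ℝ) : ℂ) := integral_ofReal
  rw [e1, e2, integral_neg, hodd]
  simp

lemma integral_even_eq_two (h : ℝ → ℝ) (hint : Integrable h) (hev : ∀ t, h (-t) = h t) :
    (∫ t, h t) = 2 * ∫ t in Set.Ioi (0:ℝ), h t := by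
  have h1 := integral_comp_neg_Ioi (0:ℝ) h
  simp_rw [hev] at h1
  rw [neg_zero] at h1
  rw [← intervalIntegral.integral_Iic_add_Ioi hint.integrableOn hint.integrableOn, ← h1]
  ring


lemma hD_eq : symStableDeriv = fun x => (1 / π) * Ig x := by
  funext x
  unfold symStableDeriv Ig gfun
  congr 1
  apply setIntegral_congr_fun measurableSet_Ioi
  intro t _
  ring

lemma hF2 (w : ℝ) :
    𝓕 (fun t : ℝ => (gabs t : ℂ)) w = ((2 * Ig (2*π*w) : ℝ) : ℂ) := by
  rw [fourier_even_real gabs gabs_integrable gabs_continuous.measurable gabs_even w]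
  norm_cast
  have he : ∀ t : ℝ, Real.cos (2*π*(-t)*w) * gabs (-t) = Real.cos (2*π*t*w) * gabs t := by
    intro t
    rw [gabs_even, show 2*π*(-t)*w = -(2*π*t*w) by ring, Real.cos_neg]
  have hint : Integrable (fun t : ℝ => Real.cos (2*π*t*w) * gabs t) :=
    gabs_integrable.bdd_mul
      ((Real.continuous_cos.comp ((continuous_const.mul continuous_id).mul
        continuous_const)).measurable.aestronglyMeasurable)
      (c := 1) (ae_of_all _ fun v => by rw [Real.norm_eq_abs]; exact Real.abs_cos_le_one _)
  rw [integral_even_eq_two _ hint he]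
  congr 1
  unfold Ig
  apply setIntegral_congr_fun measurableSet_Ioi
  intro t ht
  simp only
  rw [gabs_eq_gfun (Set.mem_Ioi.1 ht), show 2*π*t*w = t*(2*π*w) by ring]

lemma hF3 : Integrable (𝓕 (fun t : ℝ => (gabs t : ℂ))) := by
  have h : 𝓕 (fun t : ℝ => (gabs t : ℂ)) = fun w => ((2 * Ig (2*π*w) : ℝ) : ℂ) :=
    funext hF2
  rw [h]
  have h2 : Integrable (fun w : ℝ => Ig (2*π*w)) :=
    (integrable_comp_mul_left_iff Ig (by positivity : (2*π : ℝ) ≠ 0)).2 Ig_integrable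
  exact (h2.const_mul 2).ofReal

lemma key (v : ℝ) :
    (∫ x, symStableDeriv x * Real.cos (x*v)) = gabs v := by
  have hfC : Integrable (fun t : ℝ => ((gabs t : ℝ) : ℂ)) := gabs_integrable.ofReal
  have hinv := hfC.fourierInv_fourier_eq hF3 (v := v)
    ((Complex.continuous_ofReal.comp gabs_continuous).continuousAt)
  rw [fourierInv_eq_fourier_neg] at hinv
  rw [funext hF2] at hinv
  have hev2 : ∀ w : ℝ, 2 * Ig (2*π*(-w)) = 2 * Ig (2*π*w) := by
    intro w
    rw [show 2*π*(-w) = -(2*π*w) by ring, Ig_even]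
  have hint2 : Integrable (fun w : ℝ => 2 * Ig (2*π*w)) := by
    have h2 : Integrable (fun w : ℝ => Ig (2*π*w)) :=
      (integrable_comp_mul_left_iff Ig (by positivity : (2*π : ℝ) ≠ 0)).2 Ig_integrable
    exact h2.const_mul 2
  rw [fourier_even_real _ hint2
    ((Ig_cont.comp (continuous_const.mul continuous_id)).measurable.const_mul 2) hev2 (-v)]
    at hinv
  have hre : (∫ w, Real.cos (2*π*w*(-v)) * (2 * Ig (2*π*w))) = gabs v := by
    have := hinv
    exact_mod_cast this
  have hswap : (∫ w, Real.cos (2*π*w*(-v)) * (2 * Ig (2*π*w)))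
      = 2 * ∫ w, Real.cos ((2*π*w)*v) * Ig (2*π*w) := by
    rw [← MeasureTheory.integral_const_mul]
    congr 1
    funext w
    rw [show 2*π*w*(-v) = -((2*π*w)*v) by ring, Real.cos_neg]
    ring
  have hcomp : (∫ w, Real.cos ((2*π*w)*v) * Ig (2*π*w))
      = |(2*π : ℝ)⁻¹| • ∫ y, Real.cos (y*v) * Ig y := by
    exact Measure.integral_comp_mul_left (fun y => Real.cos (y*v) * Ig y) (2*π)
  have habs : |(2*π : ℝ)⁻¹| = (2*π)⁻¹ := abs_of_pos (by positivity)
  have hfin : (∫ x, symStableDeriv x * Real.cos (x*v))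
      = (1/π) * ∫ y, Real.cos (y*v) * Ig y := by
    rw [hD_eq, ← MeasureTheory.integral_const_mul]
    congr 1
    funext x
    ring
  rw [hfin, ← hre, hswap, hcomp, habs, smul_eq_mul]
  have hπ : (π : ℝ) ≠ 0 := ne_of_gt pi_pos
  field_simp
  simp only [mul_comm v]


end StableAux

open StableAux

/-- non-regularity of the stable family at the normal boundary.
(i) `D` is absolutely integrable with `∫ D = 0`, so the score `D/f(·;0)` has mean `0`
under `N(0,2)`; but (ii) `∫ D²/f(·;0) = ∞`: the score has infinite second moment
(the Fisher information for `α` diverges as `α ↑ 2`). -/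
theorem stable_score_mean_zero_infinite_information :
    Integrable symStableDeriv
    ∧ (∫ x : ℝ, symStableDeriv x) = 0
    ∧ (∫⁻ x : ℝ, ENNReal.ofReal (symStableDeriv x ^ 2 / normal02Pdf x)) = ⊤ := by
  have hD_int : Integrable symStableDeriv := by
    rw [hD_eq]; exact Ig_integrable.const_mul _
  have hDcont : Continuous symStableDeriv := by
    rw [hD_eq]; exact continuous_const.mul Ig_cont
  have hmean : (∫ x : ℝ, symStableDeriv x) = 0 := by
    have h := key 0
    simp only [mul_zero, Real.cos_zero, mul_one] at h
    rw [h]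
    simp [gabs]
  refine ⟨hD_int, hmean, ?_⟩
  by_contra hfin
  have hfpos : ∀ x : ℝ, 0 < normal02Pdf x := by
    intro x
    unfold normal02Pdf
    have h : 0 < Real.sqrt π := Real.sqrt_pos.2 pi_pos
    positivity
  have hfcont : Continuous normal02Pdf := by
    unfold normal02Pdf
    exact continuous_const.mul (((continuous_pow 2).neg.div_const 4).rexp)
  have hq_int : Integrable (fun x => symStableDeriv x ^ 2 / normal02Pdf x) := by
    constructor
    · exact ((hDcont.pow 2).div hfcont (fun x => (hfpos x).ne')).aestronglyMeasurable
    · rw [hasFiniteIntegral_iff_ofReal (ae_of_all _ (fun x => div_nonneg (sq_nonneg _) (hfpos x).le))]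
      exact lt_top_iff_ne_top.2 hfin
  have hx4f : Integrable (fun x : ℝ => x^4 * normal02Pdf x) := by
    have h0 : Integrable (fun x : ℝ => x ^ ((4:ℕ):ℝ) * Real.exp (-(1/4) * x^2)) :=
      integrable_rpow_mul_exp_neg_mul_sq (by norm_num) (by norm_num)
    simp only [Real.rpow_natCast] at h0
    have h1 := h0.const_mul (1/(2*Real.sqrt π))
    refine h1.congr (ae_of_all _ (fun x => ?_))
    simp only [normal02Pdf]
    rw [show -x^2/4 = -(1/4) * x^2 by ring]
    ring
  have hx2D : Integrable (fun x : ℝ => x^2 * |symStableDeriv x|) := by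
    refine Integrable.mono' ((hq_int.add hx4f).const_mul (1/2)) ?_ ?_
    · exact ((continuous_pow 2).mul hDcont.abs).aestronglyMeasurable
    · refine ae_of_all _ (fun x => ?_)
      have hf := hfpos x
      have hkey : 2*(x^2*|symStableDeriv x|)
          ≤ symStableDeriv x^2 / normal02Pdf x + x^4 * normal02Pdf x := by
        rw [div_add' _ _ _ hf.ne', le_div_iff₀ hf]
        nlinarith [sq_nonneg (|symStableDeriv x| - x^2 * normal02Pdf x),
          sq_abs (symStableDeriv x), sq_nonneg x, mul_pos hf hf]
      rw [Real.norm_eq_abs, abs_of_nonneg (by positivity)]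
      simp only [Pi.add_apply]
      linarith
  have hb1 : Integrable (fun x : ℝ => |symStableDeriv x| + x^2*|symStableDeriv x|) :=
    hD_int.abs.add hx2D
  have hsm : ∀ ξ : ℝ, AEStronglyMeasurable
      (fun x => symStableDeriv x * Real.cos (x*ξ)) volume := fun ξ =>
    (hDcont.mul (Real.continuous_cos.comp
      (continuous_id.mul continuous_const))).aestronglyMeasurable
  have hint0 : ∀ ξ : ℝ, Integrable (fun x => symStableDeriv x * Real.cos (x*ξ)) := by
    intro ξ
    refine Integrable.mono' hD_int.abs (hsm ξ) (ae_of_all _ (fun x => ?_))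
    rw [Real.norm_eq_abs, abs_mul]
    calc |symStableDeriv x| * |Real.cos (x*ξ)| ≤ |symStableDeriv x| * 1 :=
          mul_le_mul_of_nonneg_left (Real.abs_cos_le_one _) (abs_nonneg _)
      _ = |symStableDeriv x| := mul_one _
  -- first derivative
  have hasD1 : ∀ ξ₀ : ℝ, HasDerivAt (fun ξ => ∫ x, symStableDeriv x * Real.cos (x*ξ))
      (∫ x, symStableDeriv x * (-Real.sin (x*ξ₀) * x)) ξ₀ := by
    intro ξ₀
    have hmeas' : AEStronglyMeasurable
        (fun x => symStableDeriv x * (-Real.sin (x*ξ₀) * x)) volume :=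
      (hDcont.mul (((Real.continuous_sin.comp
        (continuous_id.mul continuous_const)).neg).mul continuous_id)).aestronglyMeasurable
    have hbound : ∀ᵐ x : ℝ, ∀ ξ ∈ Metric.ball ξ₀ 1,
        ‖symStableDeriv x * (-Real.sin (x*ξ) * x)‖
          ≤ |symStableDeriv x| + x^2*|symStableDeriv x| := by
      refine ae_of_all _ (fun x ξ _ => ?_)
      rw [Real.norm_eq_abs, abs_mul, abs_mul, abs_neg]
      have h1 : |Real.sin (x*ξ)| * |x| ≤ 1 * |x| :=
        mul_le_mul_of_nonneg_right (Real.abs_sin_le_one _) (abs_nonneg _)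
      have h2 : |x| ≤ 1 + x^2 := by nlinarith [sq_nonneg (|x| - 1), sq_abs x]
      have h3 : |symStableDeriv x| * (|Real.sin (x*ξ)| * |x|)
          ≤ |symStableDeriv x| * (1 + x^2) := by
        apply mul_le_mul_of_nonneg_left _ (abs_nonneg _)
        calc |Real.sin (x*ξ)| * |x| ≤ 1 * |x| := h1
          _ = |x| := one_mul _
          _ ≤ 1 + x^2 := h2
      nlinarith [abs_nonneg (symStableDeriv x)]
    have hdiff : ∀ᵐ x : ℝ, ∀ ξ ∈ Metric.ball ξ₀ 1,
        HasDerivAt (fun ξ => symStableDeriv x * Real.cos (x*ξ))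
          (symStableDeriv x * (-Real.sin (x*ξ) * x)) ξ := by
      refine ae_of_all _ (fun x ξ _ => ?_)
      have h := ((HasDerivAt.const_mul x (hasDerivAt_id ξ)).cos).const_mul (symStableDeriv x)
      simp only [id_eq, mul_one] at h
      refine h.congr_deriv ?_
      ring
    exact (hasDerivAt_integral_of_dominated_loc_of_deriv_le (Metric.ball_mem_nhds _ one_pos)
      (Filter.Eventually.of_forall (fun ξ => hsm ξ)) (hint0 ξ₀) hmeas' hbound hb1 hdiff).2
  -- second derivative at 0
  have hasD2 : HasDerivAt (fun ξ => ∫ x, symStableDeriv x * (-Real.sin (x*ξ) * x))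
      (∫ x, symStableDeriv x * (-(Real.cos (x*(0:ℝ)) * x) * x)) 0 := by
    have hmeas1 : ∀ ξ : ℝ, AEStronglyMeasurable
        (fun x => symStableDeriv x * (-Real.sin (x*ξ) * x)) volume := fun ξ =>
      (hDcont.mul (((Real.continuous_sin.comp
        (continuous_id.mul continuous_const)).neg).mul continuous_id)).aestronglyMeasurable
    have hmeas2 : AEStronglyMeasurable
        (fun x => symStableDeriv x * (-(Real.cos (x*(0:ℝ)) * x) * x)) volume :=
      (hDcont.mul (((Real.continuous_cos.comp
        (continuous_id.mul continuous_const)).mul continuous_id).neg.mul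
          continuous_id)).aestronglyMeasurable
    have hint1 : Integrable (fun x => symStableDeriv x * (-Real.sin (x*(0:ℝ)) * x)) := by
      refine Integrable.mono' hD_int.abs (hmeas1 0) (ae_of_all _ (fun x => ?_))
      simp [abs_nonneg]
    have hbound : ∀ᵐ x : ℝ, ∀ ξ ∈ Metric.ball (0:ℝ) 1,
        ‖symStableDeriv x * (-(Real.cos (x*ξ) * x) * x)‖
          ≤ x^2*|symStableDeriv x| := by
      refine ae_of_all _ (fun x ξ _ => ?_)
      rw [Real.norm_eq_abs, abs_mul, abs_mul, abs_neg, abs_mul]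
      have h1 : |Real.cos (x*ξ)| * |x| ≤ 1 * |x| :=
        mul_le_mul_of_nonneg_right (Real.abs_cos_le_one _) (abs_nonneg _)
      have h2 : |Real.cos (x*ξ)| * |x| * |x| ≤ |x| * |x| := by
        apply mul_le_mul_of_nonneg_right _ (abs_nonneg _)
        calc |Real.cos (x*ξ)| * |x| ≤ 1 * |x| := h1
          _ = |x| := one_mul _
      have h3 : |x| * |x| = x^2 := by rw [← abs_mul, ← sq, abs_of_nonneg (sq_nonneg x)]
      calc |symStableDeriv x| * (|Real.cos (x*ξ)| * |x| * |x|)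
          ≤ |symStableDeriv x| * (|x| * |x|) :=
            mul_le_mul_of_nonneg_left h2 (abs_nonneg _)
        _ = x^2*|symStableDeriv x| := by rw [h3]; ring
    have hdiff : ∀ᵐ x : ℝ, ∀ ξ ∈ Metric.ball (0:ℝ) 1,
        HasDerivAt (fun ξ => symStableDeriv x * (-Real.sin (x*ξ) * x))
          (symStableDeriv x * (-(Real.cos (x*ξ) * x) * x)) ξ := by
      refine ae_of_all _ (fun x ξ _ => ?_)
      have h := ((((HasDerivAt.const_mul x (hasDerivAt_id ξ)).sin).neg.mul_const x).const_mul
        (symStableDeriv x))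
      simp only [id_eq, mul_one] at h
      refine h.congr_deriv ?_
      ring
    exact (hasDerivAt_integral_of_dominated_loc_of_deriv_le (Metric.ball_mem_nhds _ one_pos)
      (Filter.Eventually.of_forall hmeas1) hint1 hmeas2 hbound hx2D hdiff).2
  -- identify the first derivative with g1 on (0, ∞)
  have hψeq : (fun ξ => ∫ x, symStableDeriv x * Real.cos (x*ξ)) = gabs := funext key
  have hψ1g1 : ∀ ξ : ℝ, 0 < ξ →
      (∫ x, symStableDeriv x * (-Real.sin (x*ξ) * x)) = g1 ξ := by
    intro ξ hξ
    have h1 : HasDerivAt gabs (∫ x, symStableDeriv x * (-Real.sin (x*ξ) * x)) ξ := by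
      rw [← hψeq]
      exact hasD1 ξ
    have h2 : HasDerivAt gabs (g1 ξ) ξ := by
      have hev : gabs =ᶠ[𝓝 ξ] gfun := by
        filter_upwards [eventually_gt_nhds hξ] with t ht
        exact gabs_eq_gfun ht
      exact (hd_gfun hξ).congr_of_eventuallyEq hev
    exact h1.unique h2
  have hψ10 : (∫ x, symStableDeriv x * (-Real.sin (x*(0:ℝ)) * x)) = 0 := by
    simp
  -- slope of the derivative function blows up at 0+
  rw [hasDerivAt_iff_tendsto_slope] at hasD2
  have hmono : 𝓝[>] (0:ℝ) ≤ 𝓝[≠] (0:ℝ) :=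
    nhdsWithin_mono 0 (fun x hx => ne_of_gt hx)
  have hsl := hasD2.mono_left hmono
  have hcongr : (slope (fun ξ => ∫ x, symStableDeriv x * (-Real.sin (x*ξ) * x)) 0)
      =ᶠ[𝓝[>] (0:ℝ)]
      fun ξ => (2*Real.log ξ + 1 - 2*ξ^2*Real.log ξ) * Real.exp (-(ξ^2)) := by
    filter_upwards [self_mem_nhdsWithin] with ξ (hξ : (0:ℝ) < ξ)
    rw [slope_def_field, hψ10, hψ1g1 ξ hξ]
    unfold g1
    rw [sub_zero, sub_zero, div_eq_iff hξ.ne']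
    ring
  have hsl2 := hsl.congr' hcongr
  have hbot : Tendsto (fun ξ => (2*Real.log ξ + 1 - 2*ξ^2*Real.log ξ) * Real.exp (-(ξ^2)))
      (𝓝[>] (0:ℝ)) atBot := by
    have hlog : Tendsto Real.log (𝓝[>] (0:ℝ)) atBot :=
      Real.tendsto_log_nhdsGT_zero
    have hsq := tendsto_log_pow 2 (by norm_num)
    have hB : Tendsto (fun ξ : ℝ => 1 - 2*(Real.log ξ * ξ^2)) (𝓝[>] (0:ℝ)) (𝓝 1) := by
      have := tendsto_const_nhds (x := (1:ℝ)) (f := 𝓝[>] (0:ℝ)) |>.sub (hsq.const_mul 2)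
      simpa using this
    have hA : Tendsto (fun ξ : ℝ => 2*Real.log ξ + 1 - 2*ξ^2*Real.log ξ)
        (𝓝[>] (0:ℝ)) atBot := by
      have h2l : Tendsto (fun ξ : ℝ => 2 * Real.log ξ) (𝓝[>] (0:ℝ)) atBot :=
        hlog.const_mul_atBot two_pos
      have := Tendsto.add_atBot hB h2l
      exact this.congr fun ξ => by ring
    exact hA.atBot_mul_pos one_pos tendsto_exp_nsq
  exact not_tendsto_atBot_of_tendsto_nhds hsl2 hbot
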